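/- arXiv:2007.11426 — 2 statements merged into one kernel-verified Lean document; each statement's English description precedes it below -/
import Mathlib

section
/- Let g := δ_ℤ be the indicator function of the integers (g(u) = 0 if u ∈ ℤ, +∞ otherwise), let f satisfy Assumption A, L > L_f, and let (u_k) be iterates of the proximal gradient algorithm with j(u_1) < ∞ (so each u_k is integer-valued almost everywhere). Then ‖u_{k+1} − u_k‖_{L^p(Ω)}^p ≥ ‖u_{k+1} − u_k‖_{L¹(Ω)} for every p ∈ [1, ∞), the sequence (u_k) is a Cauchy sequence in L¹(Ω) and converges strongly in L¹(Ω); in particular, if u* is a weak sequential limit point of (u_k) in L²(Ω), then u_k → u* strongly in L¹(Ω). -/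
open MeasureTheory Filter

/-- The canonical map `ℝ ∪ {±∞} → [0, ∞]`, truncating negative values to `0`. -/
noncomputable def erealToENNReal (x : EReal) : ENNReal :=
  if x = ⊤ then ⊤ else ENNReal.ofReal x.toReal

/-- The integral functional `j(w) := ∫ g(w(x)) dμ(x)` with values in `ℝ ∪ {±∞}`. -/
noncomputable def jfun {α : Type*} [MeasurableSpace α] (μ : Measure α)
    (g : ℝ → EReal) (w : α → ℝ) : EReal :=
  ((∫⁻ x, erealToENNReal (g (w x)) ∂μ : ENNReal) : EReal) -
    ((∫⁻ x, erealToENNReal (-(g (w x))) ∂μ : ENNReal) : EReal)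

open Classical in
/-- The indicator function `δ_ℤ` of the integers: `0` on `ℤ`, `+∞` elsewhere. -/
noncomputable def deltaZ (x : ℝ) : EReal :=
  if ∃ m : ℤ, (m : ℝ) = x then 0 else ⊤

lemma deltaZ_pos {r : ℝ} (h : ∃ m : ℤ, (m : ℝ) = r) : erealToENNReal (deltaZ r) = 0 := by
  rw [deltaZ, if_pos h]; simp [erealToENNReal]

lemma deltaZ_neg {r : ℝ} (h : ¬ ∃ m : ℤ, (m : ℝ) = r) : erealToENNReal (deltaZ r) = ⊤ := by
  rw [deltaZ, if_neg h]; simp [erealToENNReal]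

lemma erealToENNReal_neg_deltaZ (r : ℝ) : erealToENNReal (-(deltaZ r)) = 0 := by
  by_cases h : ∃ m : ℤ, (m : ℝ) = r <;>
    [rw [deltaZ, if_pos h]; rw [deltaZ, if_neg h]] <;> simp [erealToENNReal]

lemma jfun_deltaZ_eq {α : Type*} [MeasurableSpace α] (μ : Measure α) (w : α → ℝ) :
    jfun μ deltaZ w = ((∫⁻ x, erealToENNReal (deltaZ (w x)) ∂μ : ENNReal) : EReal) := by
  simp [jfun, erealToENNReal_neg_deltaZ]

lemma jfun_deltaZ_ne_top_ae {α : Type*} [MeasurableSpace α] (μ : Measure α) {w : α → ℝ}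
    (hw : Measurable w) (h : jfun μ deltaZ w ≠ ⊤) : ∀ᵐ x ∂μ, ∃ m : ℤ, (m : ℝ) = w x := by
  rw [jfun_deltaZ_eq] at h
  have hI : (∫⁻ x, erealToENNReal (deltaZ (w x)) ∂μ) ≠ ⊤ := by
    intro hc; rw [hc] at h; simp at h
  have hS : MeasurableSet {x | ∃ m : ℤ, (m : ℝ) = w x} := by
    have : {x | ∃ m : ℤ, (m : ℝ) = w x} = w ⁻¹' (Set.range (fun m : ℤ => (m : ℝ))) := by
      ext x; simp [Set.range, eq_comm]
    rw [this]
    exact hw ((Set.countable_range _).measurableSet)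
  have hcalc : (∫⁻ x, erealToENNReal (deltaZ (w x)) ∂μ)
      = ⊤ * μ {x | ∃ m : ℤ, (m : ℝ) = w x}ᶜ := by
    have : ∀ x, erealToENNReal (deltaZ (w x))
        = Set.indicator {x | ∃ m : ℤ, (m : ℝ) = w x}ᶜ (fun _ => (⊤ : ENNReal)) x := by
      intro x
      by_cases hx : ∃ m : ℤ, (m : ℝ) = w x <;> simp [deltaZ_pos, deltaZ_neg, hx]
    rw [lintegral_congr this, lintegral_indicator hS.compl]
    simp [mul_comm]
  rw [hcalc] at hI
  have : μ {x | ∃ m : ℤ, (m : ℝ) = w x}ᶜ = 0 := by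
    by_contra hne
    rw [ENNReal.top_mul hne] at hI
    exact hI rfl
  exact this

lemma jfun_deltaZ_eq_zero {α : Type*} [MeasurableSpace α] (μ : Measure α) {w : α → ℝ}
    (h : ∀ᵐ x ∂μ, ∃ m : ℤ, (m : ℝ) = w x) : jfun μ deltaZ w = 0 := by
  rw [jfun_deltaZ_eq]
  have : (∫⁻ x, erealToENNReal (deltaZ (w x)) ∂μ) = 0 := by
    rw [show (0 : ENNReal) = ∫⁻ _, 0 ∂μ by simp]
    refine lintegral_congr_ae (h.mono fun x hx => ?_)
    simp [deltaZ_pos hx]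
  rw [this]; simp

lemma int_nnnorm_le_sq {z : ℝ} (h : ∃ m : ℤ, (m : ℝ) = z) :
    (‖z‖₊ : ENNReal) ≤ (‖z‖₊ : ENNReal) ^ 2 := by
  obtain ⟨m, rfl⟩ := h
  rcases eq_or_ne m 0 with rfl | hm
  · simp
  · have h1 : (1 : ENNReal) ≤ (‖(m : ℝ)‖₊ : ENNReal) := by
      rw [show ((1 : ENNReal)) = ((1 : NNReal) : ENNReal) by simp, ENNReal.coe_le_coe,
        ← NNReal.coe_le_coe]
      simp only [coe_nnnorm, Real.norm_eq_abs, NNReal.coe_one]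
      rw [← Int.cast_abs]
      exact_mod_cast Int.one_le_abs hm
    calc (‖(m:ℝ)‖₊ : ENNReal) = (‖(m:ℝ)‖₊ : ENNReal) * 1 := (mul_one _).symm
    _ ≤ (‖(m:ℝ)‖₊ : ENNReal) * (‖(m:ℝ)‖₊ : ENNReal) := by gcongr
    _ = _ := (sq _).symm
open intervalIntegral in

lemma descent_lemma {E : Type*} [NormedAddCommGroup E] [InnerProductSpace ℝ E]
    (f : E → ℝ) (g : E → E) (hderiv : ∀ w, HasFDerivAt f ((innerSL ℝ) (g w)) w)
    (Lf : NNReal) (hlip : LipschitzWith Lf g) (x y : E) :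
    f y ≤ f x + inner ℝ (g x) (y - x) + (Lf : ℝ) / 2 * ‖y - x‖ ^ 2 := by
  set d := y - x with hd
  have hc : ∀ t : ℝ, HasDerivAt (fun t : ℝ => x + t • d) d t := fun t => by
    simpa using ((hasDerivAt_id t).smul_const d).const_add x
  have hφ : ∀ t : ℝ, HasDerivAt (fun t => f (x + t • d)) (inner ℝ (g (x + t • d)) d : ℝ) t := by
    intro t
    have h2 := (hderiv (x + t • d)).comp_hasDerivAt t (hc t)
    exact h2
  have hgcont : Continuous fun t : ℝ => (inner ℝ (g (x + t • d)) d : ℝ) := by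
    have : Continuous fun t : ℝ => g (x + t • d) :=
      hlip.continuous.comp (by continuity)
    exact this.inner continuous_const
  have key : f y - f x = ∫ t in (0:ℝ)..1, (inner ℝ (g (x + t • d)) d : ℝ) := by
    rw [intervalIntegral.integral_eq_sub_of_hasDerivAt (fun t _ => hφ t)
      (hgcont.intervalIntegrable 0 1)]
    simp [hd]
  have bound : ∀ t ∈ Set.Icc (0:ℝ) 1,
      (inner ℝ (g (x + t • d)) d : ℝ) ≤ inner ℝ (g x) d + (Lf : ℝ) * t * ‖d‖ ^ 2 := by
    intro t ht
    have h1 : (inner ℝ (g (x + t • d)) d : ℝ) - inner ℝ (g x) d = inner ℝ (g (x + t • d) - g x) d := by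
      rw [inner_sub_left]
    have h2 : (inner ℝ (g (x + t • d) - g x) d : ℝ) ≤ ‖g (x + t • d) - g x‖ * ‖d‖ :=
      real_inner_le_norm _ _
    have h3 : ‖g (x + t • d) - g x‖ ≤ (Lf : ℝ) * (t * ‖d‖) := by
      have := hlip.dist_le_mul (x + t • d) x
      rw [dist_eq_norm] at this
      simpa [norm_smul, abs_of_nonneg ht.1] using this
    nlinarith [norm_nonneg d, norm_nonneg (g (x + t • d) - g x), ht.1]
  have hint2 : (∫ t in (0:ℝ)..1, (inner ℝ (g x) d + (Lf : ℝ) * t * ‖d‖ ^ 2 : ℝ))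
      = inner ℝ (g x) d + (Lf : ℝ) / 2 * ‖d‖ ^ 2 := by
    have : ∀ t : ℝ, inner ℝ (g x) d + (Lf : ℝ) * t * ‖d‖ ^ 2
        = inner ℝ (g x) d + ((Lf : ℝ) * ‖d‖ ^ 2) * t := by intro t; ring
    simp_rw [this]
    have hii : IntervalIntegrable (fun t : ℝ => (Lf : ℝ) * ‖d‖ ^ 2 * t) volume 0 1 :=
      Continuous.intervalIntegrable (by continuity) 0 1
    rw [intervalIntegral.integral_add intervalIntegrable_const hii,
      intervalIntegral.integral_const_mul]
    simp [integral_id]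
    ring
  have hmono : (∫ t in (0:ℝ)..1, (inner ℝ (g (x + t • d)) d : ℝ))
      ≤ ∫ t in (0:ℝ)..1, (inner ℝ (g x) d + (Lf : ℝ) * t * ‖d‖ ^ 2 : ℝ) := by
    apply intervalIntegral.integral_mono_on (by norm_num)
      (hgcont.intervalIntegrable 0 1)
      (Continuous.intervalIntegrable (by continuity) 0 1)
    exact bound
  linarith [key, hmono, hint2]

lemma lintegral_nnnorm_sq_eq {α : Type*} [MeasurableSpace α] {μ : Measure α} (v : Lp ℝ 2 μ) :
    (∫⁻ x, ((‖(v : α → ℝ) x‖₊ : ENNReal)) ^ 2 ∂μ) = ENNReal.ofReal (‖v‖ ^ 2) := by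
  set I := ∫⁻ x, ((‖(v : α → ℝ) x‖₊ : ENNReal)) ^ 2 ∂μ with hI
  have h0 : eLpNorm (v : α → ℝ) 2 μ = I ^ (1/2 : ℝ) := by
    rw [eLpNorm_eq_lintegral_rpow_enorm_toReal two_ne_zero ENNReal.ofNat_ne_top, hI]
    norm_num [enorm_eq_nnnorm]
  have hs2 : eLpNorm (v : α → ℝ) 2 μ ^ (2 : ℕ) = I := by
    rw [h0, ← ENNReal.rpow_natCast, ← ENNReal.rpow_mul]
    norm_num
  have hne : eLpNorm (v : α → ℝ) 2 μ ≠ ⊤ := (Lp.memLp v).2.ne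
  rw [Lp.norm_def, ← ENNReal.toReal_pow, ENNReal.ofReal_toReal (ENNReal.pow_ne_top hne), hs2]

set_option maxHeartbeats 4000000

/-- for `g = δ_ℤ`, `f` satisfying Assumption A, `L > L_f` and proximal gradient
iterates with `j(u_1) < ∞`, one has `‖u_{k+1} − u_k‖_{L^p}^p ≥ ‖u_{k+1} − u_k‖_{L¹}` for all
`p ∈ [1, ∞)` and `k ≥ 1`, the sequence `(u_k)` is Cauchy in `L¹(Ω)` and converges strongly in
`L¹(Ω)`; in particular every weak sequential limit point `u*` in `L²(Ω)` is the strong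
`L¹(Ω)`-limit of `(u_k)`. -/
theorem discrete_controls_L1_convergence (n : ℕ) (Ω : Set (EuclideanSpace ℝ (Fin n)))
    (hΩ : MeasurableSet Ω) (hfin : volume Ω < ⊤)
    (f : Lp ℝ 2 (volume.restrict Ω) → ℝ)
    (hfbdd : ∃ m : ℝ, ∀ w, m ≤ f w)
    (gradf : Lp ℝ 2 (volume.restrict Ω) → Lp ℝ 2 (volume.restrict Ω))
    (hderiv : ∀ w, HasFDerivAt f ((innerSL ℝ) (gradf w)) w)
    (Lf : NNReal) (hlip : LipschitzWith Lf gradf)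
    (L : ℝ) (hL : (Lf : ℝ) < L)
    (u : ℕ → Lp ℝ 2 (volume.restrict Ω))
    (hiter : ∀ k : ℕ, ∀ w : Lp ℝ 2 (volume.restrict Ω),
      ((f (u k) + inner ℝ (gradf (u k)) (u (k+1) - u k) + L / 2 * ‖u (k+1) - u k‖ ^ 2 : ℝ) : EReal)
          + jfun (volume.restrict Ω) deltaZ (u (k+1)) ≤
        ((f (u k) + inner ℝ (gradf (u k)) (w - u k) + L / 2 * ‖w - u k‖ ^ 2 : ℝ) : EReal)
          + jfun (volume.restrict Ω) deltaZ w)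
    (hj1 : jfun (volume.restrict Ω) deltaZ (u 1) ≠ ⊤) :
    (∀ k : ℕ, 1 ≤ k → ∀ p : ℝ, 1 ≤ p →
      (∫⁻ x, (‖(u (k+1) : EuclideanSpace ℝ (Fin n) → ℝ) x -
          (u k : EuclideanSpace ℝ (Fin n) → ℝ) x‖₊ : ENNReal) ∂(volume.restrict Ω)) ≤
        ∫⁻ x, ENNReal.ofReal (|(u (k+1) : EuclideanSpace ℝ (Fin n) → ℝ) x -
          (u k : EuclideanSpace ℝ (Fin n) → ℝ) x| ^ p) ∂(volume.restrict Ω))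
    ∧ (∀ ε : ℝ, 0 < ε → ∃ N : ℕ, ∀ m ≥ N, ∀ k ≥ N,
        (∫⁻ x, (‖(u m : EuclideanSpace ℝ (Fin n) → ℝ) x -
          (u k : EuclideanSpace ℝ (Fin n) → ℝ) x‖₊ : ENNReal) ∂(volume.restrict Ω))
          < ENNReal.ofReal ε)
    ∧ (∃ w : EuclideanSpace ℝ (Fin n) → ℝ,
        Tendsto (fun k : ℕ => ∫⁻ x, (‖(u k : EuclideanSpace ℝ (Fin n) → ℝ) x -
          w x‖₊ : ENNReal) ∂(volume.restrict Ω)) atTop (nhds 0))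
    ∧ (∀ ustar : Lp ℝ 2 (volume.restrict Ω),
        (∃ ks : ℕ → ℕ, StrictMono ks ∧ ∀ w : Lp ℝ 2 (volume.restrict Ω),
          Tendsto (fun m : ℕ => (inner ℝ (u (ks m)) w : ℝ)) atTop (nhds (inner ℝ ustar w : ℝ))) →
        Tendsto (fun k : ℕ => ∫⁻ x, (‖(u k : EuclideanSpace ℝ (Fin n) → ℝ) x -
          (ustar : EuclideanSpace ℝ (Fin n) → ℝ) x‖₊ : ENNReal) ∂(volume.restrict Ω))
          atTop (nhds 0)) := by
  classical
  haveI : IsFiniteMeasure (volume.restrict Ω) :=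
    ⟨by rw [Measure.restrict_apply_univ]; exact hfin⟩
  obtain ⟨mbd, hmbd⟩ := hfbdd
  have hmeas : ∀ k, Measurable ((u k : EuclideanSpace ℝ (Fin n) → ℝ)) :=
    fun k => (Lp.stronglyMeasurable (u k)).measurable
  -- integrality
  have hne : ∀ k, 1 ≤ k → jfun (volume.restrict Ω) deltaZ ((u k : EuclideanSpace ℝ (Fin n) → ℝ)) ≠ ⊤ := by
    intro k hk
    induction k, hk using Nat.le_induction with
    | base => exact hj1
    | succ k hk ih =>
      have hjk : jfun (volume.restrict Ω) deltaZ ((u k : EuclideanSpace ℝ (Fin n) → ℝ)) = 0 :=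
        jfun_deltaZ_eq_zero (volume.restrict Ω) (jfun_deltaZ_ne_top_ae (volume.restrict Ω) (hmeas k) ih)
      intro htop
      have h := hiter k (u k)
      rw [hjk, htop, add_zero, EReal.coe_add_top] at h
      exact (EReal.coe_lt_top _).not_ge h
  have hae : ∀ k, 1 ≤ k → ∀ᵐ x ∂(volume.restrict Ω), ∃ m : ℤ,
      (m : ℝ) = (u k : EuclideanSpace ℝ (Fin n) → ℝ) x :=
    fun k hk => jfun_deltaZ_ne_top_ae (volume.restrict Ω) (hmeas k) (hne k hk)
  have hj0 : ∀ k, 1 ≤ k → jfun (volume.restrict Ω) deltaZ ((u k : EuclideanSpace ℝ (Fin n) → ℝ)) = 0 :=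
    fun k hk => jfun_deltaZ_eq_zero (volume.restrict Ω) (hae k hk)
  -- key real inequality
  have hkey : ∀ k, 1 ≤ k →
      (inner ℝ (gradf (u k)) (u (k+1) - u k) : ℝ) + L / 2 * ‖u (k+1) - u k‖ ^ 2 ≤ 0 := by
    intro k hk
    have h := hiter k (u k)
    rw [hj0 _ hk, hj0 _ (by omega : 1 ≤ k + 1), add_zero, add_zero, EReal.coe_le_coe_iff] at h
    simp only [sub_self, inner_zero_right, norm_zero] at h
    nlinarith [h]
  have hdesc : ∀ k, 1 ≤ k →
      f (u (k+1)) + (L - (Lf : ℝ)) / 2 * ‖u (k+1) - u k‖ ^ 2 ≤ f (u k) := by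
    intro k hk
    have h1 := descent_lemma f gradf hderiv Lf hlip (u k) (u (k+1))
    have h2 := hkey k hk
    linarith
  set c := (L - (Lf : ℝ)) / 2 with hc
  have hcpos : 0 < c := by rw [hc]; linarith
  set b : ℕ → ℝ := fun k => ‖u (k+2) - u (k+1)‖ ^ 2 with hb
  have hpartial : ∀ N, c * ∑ k ∈ Finset.range N, b k ≤ f (u 1) - f (u (N+1)) := by
    intro N
    induction N with
    | zero => simp
    | succ N ih =>
      rw [Finset.sum_range_succ, mul_add]
      have h3 := hdesc (N+1) (by omega)
      have hbN : c * b N = c * ‖u (N+2) - u (N+1)‖ ^ 2 := rfl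
      linarith
  have hbsum : Summable b := by
    apply summable_of_sum_range_le (c := (f (u 1) - mbd) / c) (fun k => by positivity)
    intro N
    have h1 := hpartial N
    have h2 := hmbd (u (N+1))
    rw [le_div_iff₀ hcpos]
    nlinarith
  -- the L¹ increments
  set A : ℕ → ENNReal := fun j => ∫⁻ x, (‖(u (j+1) : EuclideanSpace ℝ (Fin n) → ℝ) x -
      (u j : EuclideanSpace ℝ (Fin n) → ℝ) x‖₊ : ENNReal) ∂(volume.restrict Ω) with hA
  have hAsq : ∀ j, 1 ≤ j → A j ≤ ENNReal.ofReal (‖u (j+1) - u j‖ ^ 2) := by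
    intro j hj
    have h1 : A j ≤ ∫⁻ x, ((‖(u (j+1) : EuclideanSpace ℝ (Fin n) → ℝ) x -
        (u j : EuclideanSpace ℝ (Fin n) → ℝ) x‖₊ : ENNReal)) ^ 2 ∂(volume.restrict Ω) := by
      refine lintegral_mono_ae ?_
      filter_upwards [hae (j+1) (by omega), hae j hj] with x h1 h2
      obtain ⟨m1, hm1⟩ := h1
      obtain ⟨m2, hm2⟩ := h2
      exact int_nnnorm_le_sq ⟨m1 - m2, by rw [← hm1, ← hm2]; push_cast; ring⟩
    have h2 : (∫⁻ x, ((‖(u (j+1) : EuclideanSpace ℝ (Fin n) → ℝ) x -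
        (u j : EuclideanSpace ℝ (Fin n) → ℝ) x‖₊ : ENNReal)) ^ 2 ∂(volume.restrict Ω))
        = ENNReal.ofReal (‖u (j+1) - u j‖ ^ 2) := by
      rw [← lintegral_nnnorm_sq_eq (u (j+1) - u j)]
      refine lintegral_congr_ae ?_
      filter_upwards [Lp.coeFn_sub (u (j+1)) (u j)] with x hx
      rw [hx, Pi.sub_apply]
    exact h1.trans (le_of_eq h2)
  have hAfin : ∀ j, A j ≠ ⊤ := by
    intro j
    have h1 : A j = eLpNorm ((u (j+1) : EuclideanSpace ℝ (Fin n) → ℝ) -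
        (u j : EuclideanSpace ℝ (Fin n) → ℝ)) 1 (volume.restrict Ω) := by
      rw [eLpNorm_one_eq_lintegral_enorm]
      exact lintegral_congr fun x => by rw [Pi.sub_apply, enorm_eq_nnnorm]
    rw [h1]
    exact (((Lp.memLp (u (j+1))).sub (Lp.memLp (u j))).mono_exponent
      (by norm_num : (1 : ENNReal) ≤ 2)).2.ne
  have hS : (∑' j, A j) ≠ ⊤ := by
    have h1 : ∀ j : ℕ, A (j+1) ≤ ENNReal.ofReal (b j) := fun j => hAsq (j+1) (by omega)
    have h2 : (∑' j, A (j+1)) ≤ ENNReal.ofReal (∑' j, b j) := by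
      rw [ENNReal.ofReal_tsum_of_nonneg (fun j => by positivity) hbsum]
      exact ENNReal.tsum_le_tsum h1
    rw [tsum_eq_zero_add' ENNReal.summable]
    exact ENNReal.add_ne_top.2 ⟨hAfin 0, (h2.trans_lt ENNReal.ofReal_lt_top).ne⟩
  -- triangle inequality bounds
  have htri : ∀ k m, k ≤ m → (∫⁻ x, (‖(u m : EuclideanSpace ℝ (Fin n) → ℝ) x -
      (u k : EuclideanSpace ℝ (Fin n) → ℝ) x‖₊ : ENNReal) ∂(volume.restrict Ω)) ≤ ∑ j ∈ Finset.Ico k m, A j := by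
    intro k m hkm
    induction m, hkm using Nat.le_induction with
    | base => simp
    | succ m hm ih =>
      have step : (∫⁻ x, (‖(u (m+1) : EuclideanSpace ℝ (Fin n) → ℝ) x -
          (u k : EuclideanSpace ℝ (Fin n) → ℝ) x‖₊ : ENNReal) ∂(volume.restrict Ω))
          ≤ A m + ∫⁻ x, (‖(u m : EuclideanSpace ℝ (Fin n) → ℝ) x -
            (u k : EuclideanSpace ℝ (Fin n) → ℝ) x‖₊ : ENNReal) ∂(volume.restrict Ω) := by
        rw [hA, ← lintegral_add_left' (f := fun x => (‖(u (m+1) : EuclideanSpace ℝ (Fin n) → ℝ) x - (u m : EuclideanSpace ℝ (Fin n) → ℝ) x‖₊ : ENNReal)) (((hmeas (m+1)).sub (hmeas m)).nnnorm.coe_nnreal_ennreal.aemeasurable)]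
        refine lintegral_mono fun x => ?_
        have hxx : (u (m+1) : EuclideanSpace ℝ (Fin n) → ℝ) x -
            (u k : EuclideanSpace ℝ (Fin n) → ℝ) x
            = ((u (m+1) : EuclideanSpace ℝ (Fin n) → ℝ) x -
              (u m : EuclideanSpace ℝ (Fin n) → ℝ) x) +
              ((u m : EuclideanSpace ℝ (Fin n) → ℝ) x -
              (u k : EuclideanSpace ℝ (Fin n) → ℝ) x) := by ring
        rw [hxx]
        exact ENNReal.coe_le_coe.2 (nnnorm_add_le _ _)
      refine step.trans ?_
      calc A m + ∫⁻ x, (‖(u m : EuclideanSpace ℝ (Fin n) → ℝ) x -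
            (u k : EuclideanSpace ℝ (Fin n) → ℝ) x‖₊ : ENNReal) ∂(volume.restrict Ω)
          ≤ A m + ∑ j ∈ Finset.Ico k m, A j := add_le_add_right ih _
        _ = ∑ j ∈ Finset.Ico k (m+1), A j := by rw [Finset.sum_Ico_succ_top hm, add_comm]
  set T : ℕ → ENNReal := fun N => ∑' i, A (i + N) with hT
  have hTto0 : Tendsto T atTop (nhds 0) := ENNReal.tendsto_sum_nat_add A hS
  have hTfin : ∀ N, T N ≠ ⊤ := by
    intro N
    refine ne_top_of_le_ne_top hS ?_
    exact ENNReal.tsum_comp_le_tsum_of_injective (add_left_injective N) A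
  have hIcoT : ∀ N k m, N ≤ k → (∑ j ∈ Finset.Ico k m, A j) ≤ T N := by
    intro N k m hNk
    calc ∑ j ∈ Finset.Ico k m, A j ≤ ∑ j ∈ Finset.Ico N (max m N), A j :=
          Finset.sum_le_sum_of_subset (Finset.Ico_subset_Ico hNk (le_max_left m N))
      _ = ∑ i ∈ Finset.range (max m N - N), A (N + i) := by
          rw [Finset.sum_Ico_eq_sum_range]
      _ ≤ ∑' i, A (N + i) := ENNReal.sum_le_tsum _
      _ = T N := tsum_congr fun i => by rw [add_comm]
  -- Cauchy property
  have hcauchy : ∀ ε : ℝ, 0 < ε → ∃ N : ℕ, ∀ m ≥ N, ∀ k ≥ N,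
      (∫⁻ x, (‖(u m : EuclideanSpace ℝ (Fin n) → ℝ) x -
        (u k : EuclideanSpace ℝ (Fin n) → ℝ) x‖₊ : ENNReal) ∂(volume.restrict Ω)) < ENNReal.ofReal ε := by
    intro ε hε
    obtain ⟨N, hN⟩ := (hTto0.eventually_lt_const (by simpa using hε :
      (0 : ENNReal) < ENNReal.ofReal ε)).exists
    refine ⟨N, fun m hm k hk => ?_⟩
    rcases le_total k m with h | h
    · exact ((htri k m h).trans (hIcoT N k m hk)).trans_lt hN
    · have hswap : (∫⁻ x, (‖(u m : EuclideanSpace ℝ (Fin n) → ℝ) x -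
          (u k : EuclideanSpace ℝ (Fin n) → ℝ) x‖₊ : ENNReal) ∂(volume.restrict Ω))
          = ∫⁻ x, (‖(u k : EuclideanSpace ℝ (Fin n) → ℝ) x -
          (u m : EuclideanSpace ℝ (Fin n) → ℝ) x‖₊ : ENNReal) ∂(volume.restrict Ω) :=
        lintegral_congr fun x => by rw [← neg_sub, nnnorm_neg]
      rw [hswap]
      exact ((htri m k h).trans (hIcoT N m k hm)).trans_lt hN
  -- a.e. convergence and the limit function
  have haefin : ∀ᵐ x ∂(volume.restrict Ω), (∑' j, (‖(u (j+1) : EuclideanSpace ℝ (Fin n) → ℝ) x -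
      (u j : EuclideanSpace ℝ (Fin n) → ℝ) x‖₊ : ENNReal)) ≠ ⊤ := by
    have h1 : (∫⁻ x, ∑' j, (‖(u (j+1) : EuclideanSpace ℝ (Fin n) → ℝ) x -
        (u j : EuclideanSpace ℝ (Fin n) → ℝ) x‖₊ : ENNReal) ∂(volume.restrict Ω)) = ∑' j, A j :=
      lintegral_tsum (fun j => (((hmeas (j+1)).sub (hmeas j)).enorm).aemeasurable)
    have h2 := ae_lt_top (Measurable.ennreal_tsum (f := fun j x => (‖(u (j+1) : EuclideanSpace ℝ (Fin n) → ℝ) x - (u j : EuclideanSpace ℝ (Fin n) → ℝ) x‖₊ : ENNReal))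
      (fun j => ((hmeas (j+1)).sub (hmeas j)).nnnorm.coe_nnreal_ennreal)) (by rw [h1]; exact hS)
    exact h2.mono fun x hx => hx.ne
  set w : EuclideanSpace ℝ (Fin n) → ℝ :=
    fun x => limUnder atTop (fun k => (u k : EuclideanSpace ℝ (Fin n) → ℝ) x) with hw
  have hgood : ∀ᵐ x ∂(volume.restrict Ω), Tendsto (fun k => (u k : EuclideanSpace ℝ (Fin n) → ℝ) x)
      atTop (nhds (w x)) ∧ ∀ k, (‖(u k : EuclideanSpace ℝ (Fin n) → ℝ) x - w x‖₊ : ENNReal)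
        ≤ ∑' i, (‖(u (i + k + 1) : EuclideanSpace ℝ (Fin n) → ℝ) x -
          (u (i + k) : EuclideanSpace ℝ (Fin n) → ℝ) x‖₊ : ENNReal) := by
    filter_upwards [haefin] with x hx
    have hsum1 : Summable (fun j => ‖(u (j+1) : EuclideanSpace ℝ (Fin n) → ℝ) x -
        (u j : EuclideanSpace ℝ (Fin n) → ℝ) x‖₊) :=
      ENNReal.tsum_coe_ne_top_iff_summable.mp hx
    have hsum2 : Summable (fun j => (u (j+1) : EuclideanSpace ℝ (Fin n) → ℝ) x -
        (u j : EuclideanSpace ℝ (Fin n) → ℝ) x) := Summable.of_nnnorm hsum1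
    obtain ⟨s, hs⟩ := hsum2
    have hten : Tendsto (fun k => (u k : EuclideanSpace ℝ (Fin n) → ℝ) x) atTop
        (nhds ((u 0 : EuclideanSpace ℝ (Fin n) → ℝ) x + s)) := by
      have h1 := hs.tendsto_sum_nat
      have h2 : ∀ N, ∑ j ∈ Finset.range N, ((u (j+1) : EuclideanSpace ℝ (Fin n) → ℝ) x -
          (u j : EuclideanSpace ℝ (Fin n) → ℝ) x)
          = (u N : EuclideanSpace ℝ (Fin n) → ℝ) x -
            (u 0 : EuclideanSpace ℝ (Fin n) → ℝ) x :=
        fun N => Finset.sum_range_sub (fun j => (u j : EuclideanSpace ℝ (Fin n) → ℝ) x) N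
      simp_rw [h2] at h1
      have h3 := h1.add_const ((u 0 : EuclideanSpace ℝ (Fin n) → ℝ) x)
      simp only [sub_add_cancel] at h3
      simpa [add_comm] using h3
    have hlim : w x = (u 0 : EuclideanSpace ℝ (Fin n) → ℝ) x + s := hten.limUnder_eq
    rw [hlim]
    refine ⟨hten, ?_⟩
    intro k
    have hsum2' : Summable (fun j => (u (j+1) : EuclideanSpace ℝ (Fin n) → ℝ) x -
        (u j : EuclideanSpace ℝ (Fin n) → ℝ) x) := ⟨s, hs⟩
    have hsk : Summable (fun i => (u (i + k + 1) : EuclideanSpace ℝ (Fin n) → ℝ) x -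
        (u (i + k) : EuclideanSpace ℝ (Fin n) → ℝ) x) := by
      have h4 := (summable_nat_add_iff k).2 hsum2'
      exact h4
    have hskn : Summable (fun i => ‖(u (i + k + 1) : EuclideanSpace ℝ (Fin n) → ℝ) x -
        (u (i + k) : EuclideanSpace ℝ (Fin n) → ℝ) x‖) := by
      have h4 := (summable_nat_add_iff k).2 (NNReal.summable_coe.2 hsum1)
      simpa [coe_nnnorm] using h4
    have hpart : Tendsto (fun M => ∑ i ∈ Finset.range M,
        ((u (i + k + 1) : EuclideanSpace ℝ (Fin n) → ℝ) x -
          (u (i + k) : EuclideanSpace ℝ (Fin n) → ℝ) x)) atTop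
        (nhds (((u 0 : EuclideanSpace ℝ (Fin n) → ℝ) x + s) -
          (u k : EuclideanSpace ℝ (Fin n) → ℝ) x)) := by
      have h2 : ∀ M, ∑ i ∈ Finset.range M,
          ((u (i + k + 1) : EuclideanSpace ℝ (Fin n) → ℝ) x -
            (u (i + k) : EuclideanSpace ℝ (Fin n) → ℝ) x)
          = (u (M + k) : EuclideanSpace ℝ (Fin n) → ℝ) x -
            (u k : EuclideanSpace ℝ (Fin n) → ℝ) x := by
        intro M
        have h5 := Finset.sum_range_sub
          (fun i => (u (i + k) : EuclideanSpace ℝ (Fin n) → ℝ) x) M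
        simpa [add_right_comm] using h5
      simp_rw [h2]
      exact (hten.comp (tendsto_add_atTop_nat k)).sub_const _
    have hhs : HasSum (fun i => (u (i + k + 1) : EuclideanSpace ℝ (Fin n) → ℝ) x -
        (u (i + k) : EuclideanSpace ℝ (Fin n) → ℝ) x)
        (((u 0 : EuclideanSpace ℝ (Fin n) → ℝ) x + s) -
          (u k : EuclideanSpace ℝ (Fin n) → ℝ) x) :=
      (hsk.hasSum_iff_tendsto_nat).2 hpart
    have hnorm : ‖((u 0 : EuclideanSpace ℝ (Fin n) → ℝ) x + s) -
        (u k : EuclideanSpace ℝ (Fin n) → ℝ) x‖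
        ≤ ∑' i, ‖(u (i + k + 1) : EuclideanSpace ℝ (Fin n) → ℝ) x -
          (u (i + k) : EuclideanSpace ℝ (Fin n) → ℝ) x‖ := by
      rw [← hhs.tsum_eq]
      exact norm_tsum_le_tsum_norm hskn
    calc (‖(u k : EuclideanSpace ℝ (Fin n) → ℝ) x -
          (((u 0 : EuclideanSpace ℝ (Fin n) → ℝ) x + s))‖₊ : ENNReal)
        = ENNReal.ofReal ‖((u 0 : EuclideanSpace ℝ (Fin n) → ℝ) x + s) -
          (u k : EuclideanSpace ℝ (Fin n) → ℝ) x‖ := by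
          rw [← enorm_eq_nnnorm, ← ofReal_norm, norm_sub_rev]
      _ ≤ ENNReal.ofReal (∑' i, ‖(u (i + k + 1) : EuclideanSpace ℝ (Fin n) → ℝ) x -
          (u (i + k) : EuclideanSpace ℝ (Fin n) → ℝ) x‖) := ENNReal.ofReal_le_ofReal hnorm
      _ = ∑' i, ENNReal.ofReal ‖(u (i + k + 1) : EuclideanSpace ℝ (Fin n) → ℝ) x -
          (u (i + k) : EuclideanSpace ℝ (Fin n) → ℝ) x‖ :=
          ENNReal.ofReal_tsum_of_nonneg (fun i => norm_nonneg _) hskn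
      _ = ∑' i, (‖(u (i + k + 1) : EuclideanSpace ℝ (Fin n) → ℝ) x -
          (u (i + k) : EuclideanSpace ℝ (Fin n) → ℝ) x‖₊ : ENNReal) :=
          tsum_congr fun i => ofReal_norm _
  have hball : ∀ k, (∫⁻ x, (‖(u k : EuclideanSpace ℝ (Fin n) → ℝ) x - w x‖₊ : ENNReal) ∂(volume.restrict Ω))
      ≤ T k := by
    intro k
    calc (∫⁻ x, (‖(u k : EuclideanSpace ℝ (Fin n) → ℝ) x - w x‖₊ : ENNReal) ∂(volume.restrict Ω))
        ≤ ∫⁻ x, ∑' i, (‖(u (i + k + 1) : EuclideanSpace ℝ (Fin n) → ℝ) x -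
          (u (i + k) : EuclideanSpace ℝ (Fin n) → ℝ) x‖₊ : ENNReal) ∂(volume.restrict Ω) :=
          lintegral_mono_ae (hgood.mono fun x hx => hx.2 k)
      _ = ∑' i, ∫⁻ x, (‖(u (i + k + 1) : EuclideanSpace ℝ (Fin n) → ℝ) x -
          (u (i + k) : EuclideanSpace ℝ (Fin n) → ℝ) x‖₊ : ENNReal) ∂(volume.restrict Ω) :=
          lintegral_tsum (fun i => (((hmeas (i + k + 1)).sub (hmeas (i + k))).enorm).aemeasurable)
      _ = T k := tsum_congr fun i => rfl
  have hconv : Tendsto (fun k => ∫⁻ x, (‖(u k : EuclideanSpace ℝ (Fin n) → ℝ) x -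
      w x‖₊ : ENNReal) ∂(volume.restrict Ω)) atTop (nhds 0) :=
    tendsto_of_tendsto_of_tendsto_of_le_of_le tendsto_const_nhds hTto0
      (fun k => zero_le) hball
  refine ⟨?_, hcauchy, ⟨w, hconv⟩, ?_⟩
  · -- part 1
    intro k hk p hp
    refine lintegral_mono_ae ?_
    filter_upwards [hae (k+1) (by omega), hae k hk] with x h1 h2
    obtain ⟨m1, hm1⟩ := h1
    obtain ⟨m2, hm2⟩ := h2
    set z := (u (k+1) : EuclideanSpace ℝ (Fin n) → ℝ) x -
      (u k : EuclideanSpace ℝ (Fin n) → ℝ) x with hz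
    have hzint : ((m1 - m2 : ℤ) : ℝ) = z := by rw [hz, ← hm1, ← hm2]; push_cast; ring
    rcases eq_or_ne (m1 - m2) 0 with h0 | h0
    · rw [h0] at hzint
      simp only [Int.cast_zero] at hzint
      rw [← hzint]
      simp [Real.zero_rpow (by linarith : p ≠ 0)]
    · have h1 : (1 : ℝ) ≤ |z| := by
        rw [← hzint, ← Int.cast_abs]
        exact_mod_cast Int.one_le_abs h0
      calc (‖z‖₊ : ENNReal) = ENNReal.ofReal |z| := by
            rw [← enorm_eq_nnnorm, ← ofReal_norm, Real.norm_eq_abs]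
        _ ≤ ENNReal.ofReal (|z| ^ p) := by
            refine ENNReal.ofReal_le_ofReal ?_
            calc |z| = |z| ^ (1 : ℝ) := (Real.rpow_one _).symm
              _ ≤ |z| ^ p := Real.rpow_le_rpow_of_exponent_le h1 hp
  · -- part 4
    rintro ustar ⟨ks, hks, hksw⟩
    have huint : ∀ j, Integrable ((u j : EuclideanSpace ℝ (Fin n) → ℝ)) (volume.restrict Ω) := fun j =>
      memLp_one_iff_integrable.mp ((Lp.memLp (u j)).mono_exponent
        (by norm_num : (1 : ENNReal) ≤ 2))
    have hustar_int : Integrable ((ustar : EuclideanSpace ℝ (Fin n) → ℝ)) (volume.restrict Ω) :=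
      memLp_one_iff_integrable.mp ((Lp.memLp ustar).mono_exponent
        (by norm_num : (1 : ENNReal) ≤ 2))
    have hwmeas : AEStronglyMeasurable w (volume.restrict Ω) := by
      have h1 : AEMeasurable w (volume.restrict Ω) := aemeasurable_of_tendsto_metrizable_ae atTop
        (fun k => (hmeas k).aemeasurable) (hgood.mono fun x hx => hx.1)
      exact h1.aestronglyMeasurable
    have hwfin : HasFiniteIntegral w (volume.restrict Ω) := by
      rw [hasFiniteIntegral_def]
      calc (∫⁻ x, (‖w x‖₊ : ENNReal) ∂(volume.restrict Ω))
          ≤ ∫⁻ x, ((‖(u 0 : EuclideanSpace ℝ (Fin n) → ℝ) x‖₊ : ENNReal) +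
            (‖(u 0 : EuclideanSpace ℝ (Fin n) → ℝ) x - w x‖₊ : ENNReal)) ∂(volume.restrict Ω) := by
            refine lintegral_mono fun x => ?_
            have h6 : ‖w x‖₊ ≤ ‖(u 0 : EuclideanSpace ℝ (Fin n) → ℝ) x‖₊ +
                ‖w x - (u 0 : EuclideanSpace ℝ (Fin n) → ℝ) x‖₊ := by
              have h7 := nnnorm_add_le ((u 0 : EuclideanSpace ℝ (Fin n) → ℝ) x)
                (w x - (u 0 : EuclideanSpace ℝ (Fin n) → ℝ) x)
              rwa [add_sub_cancel] at h7
            calc (‖w x‖₊ : ENNReal)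
                ≤ (‖(u 0 : EuclideanSpace ℝ (Fin n) → ℝ) x‖₊ : ENNReal) +
                  (‖w x - (u 0 : EuclideanSpace ℝ (Fin n) → ℝ) x‖₊ : ENNReal) := by
                  exact_mod_cast h6
              _ = (‖(u 0 : EuclideanSpace ℝ (Fin n) → ℝ) x‖₊ : ENNReal) +
                  (‖(u 0 : EuclideanSpace ℝ (Fin n) → ℝ) x - w x‖₊ : ENNReal) := by
                  rw [← neg_sub ((u 0 : EuclideanSpace ℝ (Fin n) → ℝ) x) (w x), nnnorm_neg]
        _ = (∫⁻ x, (‖(u 0 : EuclideanSpace ℝ (Fin n) → ℝ) x‖₊ : ENNReal) ∂(volume.restrict Ω)) +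
            ∫⁻ x, (‖(u 0 : EuclideanSpace ℝ (Fin n) → ℝ) x - w x‖₊ : ENNReal) ∂(volume.restrict Ω) :=
            lintegral_add_left' ((hmeas 0).enorm.aemeasurable) _
        _ < ⊤ := by
            refine ENNReal.add_lt_top.2 ⟨?_, ?_⟩
            · exact (hasFiniteIntegral_def _ _).mp (huint 0).2
            · exact lt_of_le_of_lt (hball 0) (lt_of_le_of_ne le_top (hTfin 0))
    have hwint : Integrable w (volume.restrict Ω) := ⟨hwmeas, hwfin⟩
    have heq : ((ustar : EuclideanSpace ℝ (Fin n) → ℝ)) =ᵐ[(volume.restrict Ω)] w := by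
      refine ae_eq_of_forall_setIntegral_eq_of_sigmaFinite
        (fun s hs hμs => hustar_int.integrableOn) (fun s hs hμs => hwint.integrableOn) ?_
      intro s hs hμs
      set vS : Lp ℝ 2 (volume.restrict Ω) := indicatorConstLp 2 hs hμs.ne (1 : ℝ) with hvS
      have einner : ∀ v : Lp ℝ 2 (volume.restrict Ω), (inner ℝ v vS : ℝ) =
          ∫ x in s, (v : EuclideanSpace ℝ (Fin n) → ℝ) x ∂(volume.restrict Ω) := by
        intro v
        rw [real_inner_comm, hvS, L2.inner_indicatorConstLp_one hs hμs.ne v]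
      have h1 : Tendsto (fun m0 => ∫ x in s, (u (ks m0) : EuclideanSpace ℝ (Fin n) → ℝ) x ∂(volume.restrict Ω))
          atTop (nhds (∫ x in s, (ustar : EuclideanSpace ℝ (Fin n) → ℝ) x ∂(volume.restrict Ω))) := by
        have h2 := hksw vS
        simp only [einner] at h2
        exact h2
      have h2 : Tendsto (fun m0 => ∫ x in s, (u (ks m0) : EuclideanSpace ℝ (Fin n) → ℝ) x ∂(volume.restrict Ω))
          atTop (nhds (∫ x in s, w x ∂(volume.restrict Ω))) := by
        rw [tendsto_iff_dist_tendsto_zero]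
        have hdist : ∀ j, dist (∫ x in s, (u j : EuclideanSpace ℝ (Fin n) → ℝ) x ∂(volume.restrict Ω))
            (∫ x in s, w x ∂(volume.restrict Ω))
            ≤ (∫⁻ x, (‖(u j : EuclideanSpace ℝ (Fin n) → ℝ) x - w x‖₊ : ENNReal) ∂(volume.restrict Ω)).toReal := by
          intro j
          rw [Real.dist_eq, ← integral_sub (huint j).integrableOn hwint.integrableOn]
          have hb1 : |∫ x in s, ((u j : EuclideanSpace ℝ (Fin n) → ℝ) x - w x) ∂(volume.restrict Ω)|
              ≤ (∫⁻ x in s, (‖(u j : EuclideanSpace ℝ (Fin n) → ℝ) x - w x‖₊ : ENNReal) ∂(volume.restrict Ω)).toReal := by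
            have h3 := norm_integral_le_lintegral_norm (μ := (volume.restrict Ω).restrict s)
              (fun x => (u j : EuclideanSpace ℝ (Fin n) → ℝ) x - w x)
            simpa [Real.norm_eq_abs, ← enorm_eq_nnnorm, Real.enorm_eq_ofReal_abs] using h3
          refine hb1.trans (ENNReal.toReal_mono ?_
            (lintegral_mono' Measure.restrict_le_self le_rfl))
          exact ne_top_of_le_ne_top (hTfin j) (hball j)
        have h3 : Tendsto (fun m0 => (∫⁻ x, (‖(u (ks m0) : EuclideanSpace ℝ (Fin n) → ℝ) x -
            w x‖₊ : ENNReal) ∂(volume.restrict Ω)).toReal) atTop (nhds 0) := by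
          have h4 := hconv.comp hks.tendsto_atTop
          have h5 := (ENNReal.tendsto_toReal (a := 0) (by simp)).comp h4
          simpa [Function.comp_def] using h5
        exact squeeze_zero (fun m0 => dist_nonneg) (fun m0 => hdist (ks m0)) h3
      exact tendsto_nhds_unique h1 h2
    have hfinal : (fun k => ∫⁻ x, (‖(u k : EuclideanSpace ℝ (Fin n) → ℝ) x -
        (ustar : EuclideanSpace ℝ (Fin n) → ℝ) x‖₊ : ENNReal) ∂(volume.restrict Ω))
        = fun k => ∫⁻ x, (‖(u k : EuclideanSpace ℝ (Fin n) → ℝ) x - w x‖₊ : ENNReal) ∂(volume.restrict Ω) := by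
      funext k
      exact lintegral_congr_ae (heq.mono fun x hx => by dsimp only; rw [hx])
    rw [hfinal]
    exact hconv
end

section
/- Let p ∈ (0,1), β > 0, α ≥ 0, L > 0 and b ∈ (0, ∞]. For arbitrary q, w ∈ ℝ, every global minimizer u of the function u ↦ −q·u + (L/2)(u − w)² + (α/2)u² + β|u|^p over the set {u ∈ ℝ : |u| ≤ b} satisfies u = 0 or |u| ≥ min(b, ((α + L)/(2β(1 − p)))^{1/(p−2)}). Equivalently, for g(u) := |u|^p + δ_{[−b,b]}(u) and s > 0, every u ∈ prox_{sg}(q) satisfies u = 0 or |u| ≥ min(b, (2s(1 − p))^{1/(2−p)}). -/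
set_option maxHeartbeats 1000000

lemma inv_rpow_flip (M : ℝ) (hM : 0 < M) (p : ℝ) :
    (M⁻¹) ^ ((1:ℝ)/(p-2)) = M ^ ((1:ℝ)/(2-p)) := by
  rw [Real.inv_rpow hM.le, show (1:ℝ)/(p-2) = -(1/(2-p)) by
    rw [show p-2 = -(2-p) by ring, div_neg], Real.rpow_neg hM.le, inv_inv]

lemma aux_sparsity (p : ℝ) (hp : 0 < p ∧ p < 1) (β : ℝ) (hβ : 0 < β)
    (α : ℝ) (hα : 0 ≤ α) (L : ℝ) (hL : 0 < L) (b : ENNReal) (hb : 0 < b)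
    (q w u : ℝ) (hu : ENNReal.ofReal |u| ≤ b)
    (hmin : ∀ v : ℝ, ENNReal.ofReal |v| ≤ b →
      -q * u + L / 2 * (u - w) ^ 2 + α / 2 * u ^ 2 + β * |u| ^ p ≤
        -q * v + L / 2 * (v - w) ^ 2 + α / 2 * v ^ 2 + β * |v| ^ p) :
    u = 0 ∨ min b (ENNReal.ofReal (((α + L) / (2 * β * (1 - p))) ^ (1 / (p - 2))))
      ≤ ENNReal.ofReal |u| := by
  obtain ⟨hp0, hp1⟩ := hp
  by_cases hu0 : u = 0
  · exact Or.inl hu0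
  right
  rcases le_or_gt b (ENNReal.ofReal |u|) with hble | hlt
  · exact le_trans (min_le_left _ _) hble
  have hr : 0 < |u| := abs_pos.mpr hu0
  set r := |u| with hrdef
  obtain ⟨ε₀, hε₀, hε₀b⟩ : ∃ ε₀ : ℝ, 0 < ε₀ ∧ ENNReal.ofReal ((1 + ε₀) * r) ≤ b := by
    rcases eq_or_ne b ⊤ with rfl | hbt
    · exact ⟨1, one_pos, le_top⟩
    · have hrb : r < b.toReal := by
        rwa [ENNReal.ofReal_lt_iff_lt_toReal (abs_nonneg u) hbt] at hlt
      refine ⟨(b.toReal - r) / r, div_pos (by linarith) hr, ?_⟩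
      have h1 : (1 + (b.toReal - r)/r) * r = b.toReal := by field_simp; ring
      rw [h1, ENNReal.ofReal_toReal hbt]
  have hrp : 0 < r ^ p := Real.rpow_pos_of_pos hr p
  have h0 : ENNReal.ofReal |(0:ℝ)| ≤ b := by simp
  have hi := hmin 0 h0
  rw [show |(0:ℝ)| ^ p = 0 by rw [abs_zero]; exact Real.zero_rpow (ne_of_gt hp0)] at hi
  have key : ∀ ε : ℝ, 0 < ε → ε ≤ ε₀ →
      β * (1-p) * r^p ≤ (α+L)/2 * u^2 * (1+ε) := by
    intro ε hε hεle
    have hv : ENNReal.ofReal |(1+ε)*u| ≤ b := by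
      have h1 : |(1+ε)*u| = (1+ε)*r := by
        rw [abs_mul, abs_of_pos (show (0:ℝ) < 1+ε by linarith), hrdef]
      rw [h1]
      refine le_trans (ENNReal.ofReal_le_ofReal ?_) hε₀b
      exact mul_le_mul_of_nonneg_right (by linarith) hr.le
    have hii := hmin ((1+ε)*u) hv
    rw [show |(1+ε)*u| ^ p = (1+ε)^p * r^p by
      rw [abs_mul, abs_of_pos (show (0:ℝ) < 1+ε by linarith), hrdef,
        Real.mul_rpow (by linarith) (abs_nonneg u)]] at hii
    have hbern : (1+ε)^p ≤ 1 + p*ε :=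
      rpow_one_add_le_one_add_mul_self (by linarith) hp0.le hp1.le
    have hprod : (0:ℝ) ≤ β * r^p * (1 + p*ε - (1+ε)^p) :=
      mul_nonneg (by positivity) (by linarith)
    have step1 : 0 ≤ ε * ((-q - L*w)*u + (α+L)/2*u^2*(2+ε) + p*β*r^p) := by
      nlinarith [hii, hprod]
    have step2 : 0 ≤ (-q - L*w)*u + (α+L)/2*u^2*(2+ε) + p*β*r^p := by
      by_contra hcon
      push_neg at hcon
      nlinarith [mul_neg_of_pos_of_neg hε hcon]
    nlinarith [step2, hi]
  have key2 : β * (1-p) * r^p ≤ (α+L)/2 * u^2 := by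
    by_contra hcon
    push_neg at hcon
    have hYpos : 0 < (α+L)/2 * u^2 := by positivity
    set Y := (α+L)/2 * u^2 with hY
    set δ := (β*(1-p)*r^p - Y) / 2 with hδ
    have hδpos : 0 < δ := by simp only [hδ]; linarith
    set ε := min ε₀ (δ/Y) with hε
    have hεpos : 0 < ε := lt_min hε₀ (by positivity)
    have h1 := key ε hεpos (min_le_left _ _)
    have h2 : ε * Y ≤ δ := (le_div_iff₀ hYpos).mp (min_le_right _ _)
    nlinarith
  have h2p : 0 < 2 - p := by linarith
  have hcpos : 0 < α + L := by positivity
  set M := 2*β*(1-p)/(α+L) with hM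
  have hMpos : 0 < M := div_pos (by nlinarith) hcpos
  have hM1 : M * r^p ≤ r^((2:ℝ)-p) * r^p := by
    rw [← Real.rpow_add hr, sub_add_cancel, Real.rpow_two]
    rw [hM, div_mul_eq_mul_div, div_le_iff₀ hcpos]
    nlinarith [key2, sq_abs u]
  have hM2 : M ≤ r^((2:ℝ)-p) := le_of_mul_le_mul_right hM1 hrp
  have hru : M^((1:ℝ)/(2-p)) ≤ r := by
    have h3 : M^((1:ℝ)/(2-p)) ≤ (r^((2:ℝ)-p))^((1:ℝ)/(2-p)) :=
      Real.rpow_le_rpow hMpos.le hM2 (by positivity)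
    have h4 : ((2:ℝ)-p) * ((1:ℝ)/(2-p)) = 1 := by field_simp
    rwa [← Real.rpow_mul hr.le, h4, Real.rpow_one] at h3
  have hgoal : ((α + L) / (2 * β * (1 - p))) ^ ((1:ℝ) / (p - 2)) ≤ r := by
    rw [show (α + L) / (2 * β * (1 - p)) = M⁻¹ by rw [hM, inv_div],
      inv_rpow_flip M hMpos p]
    exact hru
  exact le_trans (min_le_right _ _) (ENNReal.ofReal_le_ofReal hgoal)

open Classical in
/-- The `L^p`-type penalty with box constraint: `g(u) = |u|^p + δ_{[-b,b]}(u)`, where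
`b ∈ (0, ∞]` and `δ_{[-b,b]}` is the indicator function of `[-b, b]`. -/
noncomputable def gLp (p : ℝ) (b : ENNReal) (u : ℝ) : EReal :=
  if ENNReal.ofReal |u| ≤ b then ((|u| ^ p : ℝ) : EReal) else ⊤

/-- `u ∈ prox_{s·g}(q)` for `g : ℝ → ℝ ∪ {+∞}` modeled as `EReal`-valued. -/
def IsProx (g : ℝ → EReal) (s q u : ℝ) : Prop :=
  ∀ v : ℝ, (((u - q) ^ 2 / 2 : ℝ) : EReal) + (s : EReal) * g u ≤
    (((v - q) ^ 2 / 2 : ℝ) : EReal) + (s : EReal) * g v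

/-- for `p ∈ (0,1)`, `β > 0`, `α ≥ 0`, `L > 0`, `b ∈ (0, ∞]`, every global
minimizer `u` of `u ↦ −q·u + (L/2)(u − w)² + (α/2)u² + β|u|^p` over `{|u| ≤ b}` satisfies
`u = 0` or `|u| ≥ min(b, ((α+L)/(2β(1−p)))^{1/(p−2)})`; equivalently, for
`g = |·|^p + δ_{[−b,b]}` and `s > 0`, every `u ∈ prox_{s g}(q)` satisfies `u = 0` or
`|u| ≥ min(b, (2s(1−p))^{1/(2−p)})`. -/
theorem Lp_prox_sparsity (p : ℝ) (hp : 0 < p ∧ p < 1) (β : ℝ) (hβ : 0 < β)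
    (α : ℝ) (hα : 0 ≤ α) (L : ℝ) (hL : 0 < L) (b : ENNReal) (hb : 0 < b) :
    (∀ q w u : ℝ,
      (ENNReal.ofReal |u| ≤ b ∧
        ∀ v : ℝ, ENNReal.ofReal |v| ≤ b →
          -q * u + L / 2 * (u - w) ^ 2 + α / 2 * u ^ 2 + β * |u| ^ p ≤
            -q * v + L / 2 * (v - w) ^ 2 + α / 2 * v ^ 2 + β * |v| ^ p) →
      u = 0 ∨ min b (ENNReal.ofReal (((α + L) / (2 * β * (1 - p))) ^ (1 / (p - 2))))
        ≤ ENNReal.ofReal |u|)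
    ∧ (∀ s : ℝ, 0 < s → ∀ q u : ℝ, IsProx (gLp p b) s q u →
        u = 0 ∨ min b (ENNReal.ofReal ((2 * s * (1 - p)) ^ (1 / (2 - p))))
          ≤ ENNReal.ofReal |u|) := by
  constructor
  · intro q w u ⟨hu, hmin⟩
    exact aux_sparsity p hp β hβ α hα L hL b hb q w u hu hmin
  · intro s hs q u hprox
    have hg0 : gLp p b 0 = ((0:ℝ) : EReal) := by
      simp [gLp, Real.zero_rpow (ne_of_gt hp.1)]
    -- first: u is feasible
    have hu : ENNReal.ofReal |u| ≤ b := by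
      by_contra hcon
      have h0 := hprox 0
      rw [hg0] at h0
      simp only [gLp, if_neg hcon] at h0
      rw [EReal.coe_mul_top_of_pos hs] at h0
      simp at h0
    have hgu : gLp p b u = ((|u| ^ p : ℝ) : EReal) := by simp [gLp, if_pos hu]
    have hreal : ∀ v : ℝ, ENNReal.ofReal |v| ≤ b →
        (u - q) ^ 2 / 2 + s * |u| ^ p ≤ (v - q) ^ 2 / 2 + s * |v| ^ p := by
      intro v hv
      have h := hprox v
      rw [hgu] at h
      simp only [gLp, if_pos hv] at h
      rw [← EReal.coe_mul, ← EReal.coe_mul, ← EReal.coe_add, ← EReal.coe_add] at h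
      exact_mod_cast h
    have hmin : ∀ v : ℝ, ENNReal.ofReal |v| ≤ b →
        -q * u + 1 / 2 * (u - 0) ^ 2 + 0 / 2 * u ^ 2 + s * |u| ^ p ≤
          -q * v + 1 / 2 * (v - 0) ^ 2 + 0 / 2 * v ^ 2 + s * |v| ^ p := by
      intro v hv
      have := hreal v hv
      nlinarith [this]
    have := aux_sparsity p hp s hs 0 le_rfl 1 one_pos b hb q 0 u hu hmin
    rcases this with h | h
    · exact Or.inl h
    · right
      have heq : ((0 + 1) / (2 * s * (1 - p))) ^ ((1:ℝ) / (p - 2)) =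
          (2 * s * (1 - p)) ^ ((1:ℝ) / (2 - p)) := by
        have hMpos : 0 < 2 * s * (1 - p) := by nlinarith [hp.2]
        rw [show (0 + 1) / (2 * s * (1 - p)) = (2 * s * (1 - p))⁻¹ by
          rw [zero_add, one_div], inv_rpow_flip _ hMpos p]
      rwa [heq] at h
end
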